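/- Let W be a real n_v × n_w matrix, v ∈ ℝ^{n_v}, c ∈ ℝ^{n_w} and d ∈ ℝ, and suppose the polyhedron 𝒲 := {w ∈ ℝ^{n_w} : W w ≤ v} is nonempty. Then the robust constraint (∀ w ∈ 𝒲, cᵀw + d ≤ 0) holds if and only if there exists λ ∈ ℝ^{n_v} with λ ≥ 0 componentwise, Wᵀλ = c and vᵀλ + d ≤ 0. (Exact dual reformulation of a robust affine constraint via linear-programming strong duality.) -/

import Mathlib

open Matrix Finset
open scoped InnerProductSpace

variable {E : Type*} [NormedAddCommGroup E] [InnerProductSpace ℝ E]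

/-- Carathéodory for cones: a nonnegative combination can be rewritten as a nonnegative
combination whose support is linearly independent. -/
lemma carath_cone {ι : Type*} [Fintype ι] [DecidableEq ι] (v : ι → E) :
    ∀ n (l : ι → ℝ), (∀ i, 0 ≤ l i) →
      (univ.filter (fun i => l i ≠ 0)).card ≤ n →
      ∃ μ : ι → ℝ, (∀ i, 0 ≤ μ i) ∧ (∑ i, μ i • v i = ∑ i, l i • v i) ∧
        LinearIndependent ℝ (fun i : {i // μ i ≠ 0} => v i) := by
  classical
  intro n
  induction n with
  | zero =>
    intro l hl hcard
    refine ⟨l, hl, rfl, ?_⟩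
    have : ∀ i, l i = 0 := by
      intro i
      by_contra h
      have : i ∈ univ.filter (fun i => l i ≠ 0) := by simp [h]
      have := Finset.card_pos.mpr ⟨i, this⟩
      omega
    have : IsEmpty {i // l i ≠ 0} := ⟨fun j => j.2 (this j.1)⟩
    exact linearIndependent_empty_type
  | succ n ih =>
    intro l hl hcard
    by_cases hind : LinearIndependent ℝ (fun i : {i // l i ≠ 0} => v i)
    · exact ⟨l, hl, rfl, hind⟩
    · obtain ⟨g, hg0, j₀, hj₀⟩ := Fintype.not_linearIndependent_iff.mp hind
      -- extend g to ι by 0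
      set G₀ : ι → ℝ := fun i => if h : l i ≠ 0 then g ⟨i, h⟩ else 0 with hG₀
      have hG₀sum : ∑ i, G₀ i • v i = 0 := by
        rw [← hg0]
        rw [← Finset.sum_filter_add_sum_filter_not univ (fun i => l i ≠ 0)]
        have h2 : ∑ i ∈ univ.filter (fun i => ¬ l i ≠ 0), G₀ i • v i = 0 := by
          apply Finset.sum_eq_zero
          intro i hi
          simp only [mem_filter] at hi
          simp [hG₀, hi.2]
        rw [h2, add_zero]
        rw [Finset.sum_subtype (p := fun i => l i ≠ 0) (univ.filter (fun i => l i ≠ 0)) (fun x => by simp)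
          (fun i => G₀ i • v i)]
        exact Finset.sum_congr rfl fun j _ => by simp [hG₀, j.2]
      have hG₀ne : ∃ i, G₀ i ≠ 0 := ⟨j₀, by simp [hG₀, j₀.2, hj₀]⟩
      -- WLOG some coordinate positive
      obtain ⟨G, hGsum, hGsupp, i₁, hi₁⟩ :
          ∃ G : ι → ℝ, (∑ i, G i • v i = 0) ∧ (∀ i, l i = 0 → G i = 0) ∧ ∃ i, 0 < G i := by
        obtain ⟨i, hi⟩ := hG₀ne
        rcases lt_or_gt_of_ne hi with h | h
        · refine ⟨-G₀, by simp [hG₀sum], fun i hli => by simp [hG₀, hli], i, by simpa using h⟩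
        · refine ⟨G₀, hG₀sum, fun i hli => by simp [hG₀, hli], i, h⟩
      set T : Finset ι := univ.filter (fun i => 0 < G i) with hT
      have hTne : T.Nonempty := ⟨i₁, by simp [hT, hi₁]⟩
      set t : ℝ := T.inf' hTne (fun i => l i / G i) with ht
      obtain ⟨i₀, hi₀T, hi₀⟩ := Finset.exists_mem_eq_inf' hTne (fun i => l i / G i)
      have hGi₀ : 0 < G i₀ := by simpa [hT] using hi₀T
      have htval : t = l i₀ / G i₀ := ht.trans hi₀
      have ht0 : 0 ≤ t := by
        rw [htval]; exact div_nonneg (hl i₀) hGi₀.le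
      set μ : ι → ℝ := fun i => l i - t * G i with hμ
      have hμ0 : ∀ i, 0 ≤ μ i := by
        intro i
        rcases le_or_gt (G i) 0 with h | h
        · have : t * G i ≤ 0 := mul_nonpos_of_nonneg_of_nonpos ht0 h
          simp only [hμ]; linarith [hl i]
        · have hle : t ≤ l i / G i := by
            rw [ht]; exact Finset.inf'_le _ (by simp [hT, h])
          have h2 : t * G i ≤ l i := by
            rw [← le_div_iff₀ h]; exact hle
          simp only [hμ]
          linarith
      have hμsum : ∑ i, μ i • v i = ∑ i, l i • v i := by
        simp only [hμ, sub_smul, ← smul_smul, Finset.sum_sub_distrib, ← Finset.smul_sum, hGsum,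
          smul_zero, sub_zero]
      have hμi₀ : μ i₀ = 0 := by
        show l i₀ - t * G i₀ = 0
        rw [htval]
        field_simp
        ring
      have hsubset : univ.filter (fun i => μ i ≠ 0) ⊆ (univ.filter (fun i => l i ≠ 0)).erase i₀ := by
        intro i hi
        simp only [mem_filter, mem_erase, mem_univ, true_and] at hi ⊢
        constructor
        · rintro rfl; exact hi hμi₀
        · intro hli
          exact hi (by simp [hμ, hli, hGsupp i hli])
      have hcard' : (univ.filter (fun i => μ i ≠ 0)).card ≤ n := by
        have h1 := Finset.card_le_card hsubset
        have h2 : ((univ.filter (fun i => l i ≠ 0)).erase i₀).card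
            < (univ.filter (fun i => l i ≠ 0)).card := by
          apply Finset.card_erase_lt_of_mem
          have : l i₀ ≠ 0 := by
            intro h; rw [hGsupp i₀ h] at hGi₀; exact lt_irrefl _ hGi₀
          simp [this]
        omega
      obtain ⟨μ', h1, h2, h3⟩ := ih μ hμ0 hcard'
      exact ⟨μ', h1, h2.trans hμsum, h3⟩

/-- A finitely generated cone in a finite-dimensional inner product space is closed. -/
lemma cone_isClosed {ι : Type*} [Fintype ι] [FiniteDimensional ℝ E] (v : ι → E) :
    IsClosed {x : E | ∃ l : ι → ℝ, (∀ i, 0 ≤ l i) ∧ ∑ i, l i • v i = x} := by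
  classical
  have key : {x : E | ∃ l : ι → ℝ, (∀ i, 0 ≤ l i) ∧ ∑ i, l i • v i = x} =
      ⋃ s : {s : Finset ι // LinearIndependent ℝ (fun i : {x // x ∈ s.1} => v i.1)},
        (fun g : {x // x ∈ s.1} → ℝ => ∑ j, g j • v j.1) '' {g | ∀ j, 0 ≤ g j} := by
    ext x
    simp only [Set.mem_setOf_eq, Set.mem_iUnion, Set.mem_image]
    constructor
    · rintro ⟨l, hl, rfl⟩
      obtain ⟨μ, hμ0, hμsum, hμind⟩ := carath_cone v _ l hl le_rfl
      set s : Finset ι := univ.filter (fun i => μ i ≠ 0) with hs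
      have hind' : LinearIndependent ℝ (fun i : {x // x ∈ s} => v i.1) := by
        have he : ∀ i : s, μ i.1 ≠ 0 := fun i => by
          have := i.2; simp only [hs, mem_filter] at this; exact this.2
        let e : {x // x ∈ s} ≃ {i // μ i ≠ 0} :=
          ⟨fun i => ⟨i.1, he i⟩, fun i => ⟨i.1, by simp [hs, i.2]⟩,
           fun i => rfl, fun i => rfl⟩
        exact hμind.comp e e.injective
      refine ⟨⟨s, hind'⟩, fun j => μ j.1, fun j => hμ0 j.1, ?_⟩
      show (∑ j : {x // x ∈ s}, μ j.1 • v j.1) = ∑ i, l i • v i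
      rw [← hμsum]
      rw [← Finset.sum_subtype (p := fun i => i ∈ s) s (fun x => Iff.rfl) (fun i => μ i • v i)]
      apply Finset.sum_subset (Finset.subset_univ s)
      intro i _ hi
      have : μ i = 0 := by by_contra h; exact hi (by simp [hs, h])
      simp [this]
    · rintro ⟨s, g, hg, rfl⟩
      refine ⟨fun i => if h : i ∈ s.1 then g ⟨i, h⟩ else 0, fun i => ?_, ?_⟩
      · by_cases h : i ∈ s.1 <;> simp [h, hg]
      · rw [← Finset.sum_filter_add_sum_filter_not univ (fun i => i ∈ s.1)]
        have h2 : ∑ i ∈ univ.filter (fun i => ¬ i ∈ s.1),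
            (if h : i ∈ s.1 then g ⟨i, h⟩ else 0) • v i = 0 := by
          apply Finset.sum_eq_zero
          intro i hi
          simp only [mem_filter] at hi
          simp [hi.2]
        rw [h2, add_zero]
        have h3 : univ.filter (fun i => i ∈ s.1) = s.1 := by
          ext i; simp
        rw [h3]
        rw [Finset.sum_subtype (p := fun i => i ∈ s.1) s.1 (fun x => Iff.rfl)]
        exact Finset.sum_congr rfl fun j _ => by simp [j.2]
  rw [key]
  apply isClosed_iUnion_of_finite
  rintro ⟨s, hs⟩
  -- the map is an injective linear map, hence a closed embedding
  let f : ({x // x ∈ s} → ℝ) →ₗ[ℝ] E :=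
    LinearMap.lsum ℝ (fun _ : {x // x ∈ s} => ℝ) ℕ fun j => LinearMap.id.smulRight (v j.1)
  have hker : LinearMap.ker f = ⊥ := (Fintype.linearIndependent_iff' ).mp hs
  have hce := LinearMap.isClosedEmbedding_of_injective (𝕜 := ℝ) hker
  have hclosed : IsClosed {g : {x // x ∈ s} → ℝ | ∀ j, 0 ≤ g j} := by
    have : {g : {x // x ∈ s} → ℝ | ∀ j, 0 ≤ g j} = Set.pi Set.univ (fun _ => Set.Ici 0) := by
      ext g
      simp only [Set.mem_setOf_eq, Set.mem_pi, Set.mem_univ, Set.mem_Ici, true_implies]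
    rw [this]
    exact isClosed_set_pi fun _ _ => isClosed_Ici
  have hmap := hce.isClosedMap _ hclosed
  have heq : (fun g : {x // x ∈ s} → ℝ => ∑ j, g j • v j.1) = ⇑f := by
    funext g
    simp [f, LinearMap.lsum_apply, LinearMap.smulRight_apply]
  rw [heq]
  exact hmap

open scoped InnerProductSpace in
/-- Farkas-type alternative via hyperplane separation. -/
lemma farkas_alt {ι : Type*} [Fintype ι] [FiniteDimensional ℝ E] (u : ι → E) (b : E)
    (hb : ¬ ∃ l : ι → ℝ, (∀ i, 0 ≤ l i) ∧ ∑ i, l i • u i = b) :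
    ∃ y : E, (∀ i, 0 ≤ ⟪u i, y⟫_ℝ) ∧ ⟪y, b⟫_ℝ < 0 := by
  classical
  let K : ConvexCone ℝ E :=
    { carrier := {x : E | ∃ l : ι → ℝ, (∀ i, 0 ≤ l i) ∧ ∑ i, l i • u i = x}
      smul_mem' := by
        rintro t ht x ⟨l, hl, rfl⟩
        exact ⟨t • l, fun i => mul_nonneg ht.le (hl i), by
          rw [Finset.smul_sum]; exact Finset.sum_congr rfl fun i _ => by
            simp [smul_smul]⟩
      add_mem' := by
        rintro x ⟨l, hl, rfl⟩ y ⟨m, hm, rfl⟩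
        exact ⟨l + m, fun i => add_nonneg (hl i) (hm i), by
          rw [← Finset.sum_add_distrib]; exact Finset.sum_congr rfl fun i _ => by
            simp [add_smul]⟩ }
  have hne : ((K : Set E)).Nonempty := ⟨0, ⟨0, fun i => le_rfl, by simp⟩⟩
  have hc : IsClosed (K : Set E) := cone_isClosed u
  have hbK : b ∉ K := hb
  obtain ⟨y, hy1, hy2⟩ : ∃ y : E, (∀ x ∈ (K : Set E), 0 ≤ ⟪x, y⟫_ℝ) ∧ ⟪y, b⟫_ℝ < 0 := by
    let P : ProperCone ℝ E :=
      { carrier := (K : Set E)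
        add_mem' := fun ha hb => K.add_mem ha hb
        zero_mem' := ⟨0, fun _ => le_rfl, by simp⟩
        smul_mem' := by
          rintro c x ⟨l, hl, rfl⟩
          exact ⟨(c : ℝ) • l, fun i => mul_nonneg c.2 (hl i), by
            show _ = (c : ℝ) • (∑ i, l i • u i); rw [Finset.smul_sum]; exact Finset.sum_congr rfl fun i _ => by
              simp [smul_smul]⟩
        isClosed' := hc }
    obtain ⟨y, hy1, hy2⟩ := P.hyperplane_separation' (x₀ := b) hbK
    exact ⟨y, hy1, by rw [real_inner_comm]; exact hy2⟩
  refine ⟨y, fun i => ?_, hy2⟩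
  apply hy1
  refine ⟨Pi.single i 1, fun j => ?_, ?_⟩
  · by_cases h : j = i <;> simp [h, Pi.single_apply]
  · rw [Finset.sum_eq_single i (fun j _ hj => by simp [Pi.single_apply, hj]) (by simp)]
    simp

/-- **Exact dual reformulation of a robust affine constraint (LP strong duality).**
If the polyhedron `{w : W w ≤ v}` is nonempty, then the robust constraint
`∀ w, W w ≤ v → cᵀ w + d ≤ 0` holds iff there exists `lam ≥ 0` with
`Wᵀ lam = c` and `vᵀ lam + d ≤ 0`. -/
theorem robust_affine_constraint_dual_iff
    (n_v n_w : ℕ) (W : Matrix (Fin n_v) (Fin n_w) ℝ)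
    (v : Fin n_v → ℝ) (c : Fin n_w → ℝ) (d : ℝ)
    (hne : ∃ w : Fin n_w → ℝ, W.mulVec w ≤ v) :
    (∀ w : Fin n_w → ℝ, W.mulVec w ≤ v → c ⬝ᵥ w + d ≤ 0) ↔
      (∃ lam : Fin n_v → ℝ,
        (∀ i, 0 ≤ lam i) ∧ Wᵀ.mulVec lam = c ∧ v ⬝ᵥ lam + d ≤ 0) := by
  classical
  constructor
  · -- hard direction
    intro hrob
    let E := EuclideanSpace ℝ (Fin n_w ⊕ Unit)
    let φ := WithLp.linearEquiv 2 ℝ ((Fin n_w ⊕ Unit) → ℝ)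
    let U : Option (Fin n_v) → ((Fin n_w ⊕ Unit) → ℝ) := fun o =>
      Option.elim o (Sum.elim (fun _ => 0) (fun _ => 1))
        (fun i => Sum.elim (fun j => W i j) (fun _ => v i))
    let u : Option (Fin n_v) → E := fun o => φ.symm (U o)
    let B : (Fin n_w ⊕ Unit) → ℝ := Sum.elim c (fun _ => -d)
    let b : E := φ.symm B
    have hinner : ∀ (f : (Fin n_w ⊕ Unit) → ℝ) (y : E),
        ⟪φ.symm f, y⟫_ℝ = ∑ k, f k * φ y k := by
      intro f y
      rw [PiLp.inner_apply]
      refine Finset.sum_congr rfl fun k _ => ?_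
      show (φ y k) * (starRingEnd ℝ) (f k) = f k * φ y k
      simp [mul_comm]
    have hmem : ∃ l : Option (Fin n_v) → ℝ, (∀ i, 0 ≤ l i) ∧ ∑ i, l i • u i = b := by
      by_contra h
      obtain ⟨y, hy1, hy2⟩ := farkas_alt u b h
      set Y : (Fin n_w ⊕ Unit) → ℝ := φ y with hY
      set y1 : Fin n_w → ℝ := fun j => Y (Sum.inl j) with hy1def
      set t : ℝ := Y (Sum.inr ()) with htdef
      have ht0 : 0 ≤ t := by
        have := hy1 none
        rw [hinner] at this
        simp only [← hY] at this
        simpa [U, Fintype.sum_sum_type, Fintype.sum_unique] using this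
      have hWy : ∀ i, 0 ≤ W.mulVec y1 i + t * v i := by
        intro i
        have := hy1 (some i)
        rw [hinner] at this
        simp only [← hY] at this
        simp only [U, Option.elim, Fintype.sum_sum_type, Sum.elim_inl, Sum.elim_inr,
          Fintype.sum_unique] at this
        simpa [Matrix.mulVec, dotProduct, mul_comm] using this
      have hyb : c ⬝ᵥ y1 - t * d < 0 := by
        have h2 : ⟪y, b⟫_ℝ = ⟪b, y⟫_ℝ := real_inner_comm _ _
        rw [h2, hinner] at hy2
        simp only [← hY] at hy2
        simp only [B, Fintype.sum_sum_type, Sum.elim_inl, Sum.elim_inr,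
          Fintype.sum_unique] at hy2
        have h3 : c ⬝ᵥ y1 = ∑ j, c j * Y (Sum.inl j) := rfl
        rw [h3]
        nlinarith [hy2]
      set X := c ⬝ᵥ y1 with hX
      rcases eq_or_lt_of_le ht0 with ht | ht
      · -- t = 0
        have hWy0 : ∀ i, 0 ≤ W.mulVec y1 i := fun i => by
          have := hWy i; rw [← ht] at this; linarith
        have hX0 : X < 0 := by rw [← ht] at hyb; simpa using hyb
        obtain ⟨w0, hw0⟩ := hne
        set a : ℝ := -X with ha
        have ha0 : 0 < a := by simp [ha]; linarith
        set s : ℝ := max 0 ((-d - c ⬝ᵥ w0) / a + 1) with hsdef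
        have hs0 : 0 ≤ s := le_max_left _ _
        have hs1 : (-d - c ⬝ᵥ w0) / a < s := lt_of_lt_of_le (by linarith) (le_max_right _ _)
        have hsa : -d - c ⬝ᵥ w0 < s * a := by
          rwa [div_lt_iff₀ ha0] at hs1
        have hfeas : W.mulVec (w0 - s • y1) ≤ v := by
          intro i
          rw [Matrix.mulVec_sub, Matrix.mulVec_smul]
          have : 0 ≤ s * W.mulVec y1 i := mul_nonneg hs0 (hWy0 i)
          have h4 := hw0 i
          simp only [Pi.sub_apply, Pi.smul_apply, smul_eq_mul]
          linarith
        have := hrob _ hfeas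
        rw [dotProduct_sub, dotProduct_smul] at this
        simp only [smul_eq_mul, ← hX] at this
        nlinarith
      · -- t > 0
        have hfeas : W.mulVec ((-(1/t)) • y1) ≤ v := by
          intro i
          rw [Matrix.mulVec_smul]
          simp only [Pi.smul_apply, smul_eq_mul]
          have h4 := hWy i
          have h5 : t * (-(1/t) * W.mulVec y1 i) = -(W.mulVec y1 i) := by
            field_simp
          rw [← mul_le_mul_iff_right₀ ht, h5]
          linarith
        have := hrob _ hfeas
        rw [dotProduct_smul] at this
        simp only [smul_eq_mul, ← hX] at this
        have h5 : t * (-(1/t) * X + d) ≤ 0 := mul_nonpos_of_nonneg_of_nonpos ht.le this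
        have h6 : t * (-(1/t) * X + d) = -X + t * d := by
          field_simp
        rw [h6] at h5
        linarith
    obtain ⟨l, hl0, hlsum⟩ := hmem
    have hpis : ∀ k : Fin n_w ⊕ Unit, (∑ i, l i • U i) k = B k := by
      intro k
      have := congrArg (fun x => φ x) hlsum
      simp only [map_sum, _root_.map_smul] at this
      have h7 : ∀ i, φ (u i) = U i := fun i => φ.apply_symm_apply (U i)
      simp only [h7] at this
      rw [show φ b = B from φ.apply_symm_apply B] at this
      exact congrFun this k
    refine ⟨fun i => l (some i), fun i => hl0 (some i), ?_, ?_⟩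
    · funext j
      have := hpis (Sum.inl j)
      simp only [Finset.sum_apply, Pi.smul_apply, smul_eq_mul, Fintype.sum_option,
        U, Option.elim, Sum.elim_inl, B] at this
      rw [Matrix.mulVec]
      show Wᵀ j ⬝ᵥ (fun i => l (some i)) = c j
      rw [← this]
      simp [dotProduct, Matrix.transpose_apply, mul_comm]
    · have := hpis (Sum.inr ())
      simp only [Finset.sum_apply, Pi.smul_apply, smul_eq_mul, Fintype.sum_option,
        U, Option.elim, Sum.elim_inr, B] at this
      have h8 : v ⬝ᵥ (fun i => l (some i)) = ∑ i, l (some i) * v i := by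
        simp [dotProduct, mul_comm]
      rw [h8]
      have h9 := hl0 none
      linarith [this]
  · -- easy direction
    rintro ⟨lam, h0, hWt, hvd⟩ w hw
    have h1 : c ⬝ᵥ w = lam ⬝ᵥ W.mulVec w := by
      rw [← hWt, Matrix.mulVec_transpose, ← Matrix.dotProduct_mulVec]
    have h2 : lam ⬝ᵥ W.mulVec w ≤ lam ⬝ᵥ v := by
      apply Finset.sum_le_sum
      intro i _
      exact mul_le_mul_of_nonneg_left (hw i) (h0 i)
    have h3 : lam ⬝ᵥ v = v ⬝ᵥ lam := dotProduct_comm _ _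
    linarith
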